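/- Let n ≥ 1 and let f be a polynomial in n variables with rational coefficients, of degree d ≥ 1, evaluated on ℝⁿ. Let Q ⊂ ℝⁿ be nonempty and finite with f(q) ≠ 0 for all q ∈ Q. With c = ‖f‖∞, M ≥ max_{q∈Q} ‖q‖∞ + 1, 0 < m ≤ min_{q∈Q} |f(q)|, and 𝒹 = min{1, m / (C(n+d,d)² · M^d · c)}, the following holds: for every q ∈ Q and every r ∈ ℝⁿ with ‖r − q‖∞ ≤ 𝒹, the point r lies in the same connected component of S = {x ∈ ℝⁿ : f(x) ≠ 0} as q. -/

import Mathlib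

open Finset

lemma my_abs_pow_sub_pow_le (x y M : ℝ) (hM : 1 ≤ M) (hx : |x| ≤ M) (hy : |y| ≤ M) (k : ℕ) :
    |x ^ k - y ^ k| ≤ k * M ^ k * |x - y| := by
  have h := geom_sum₂_mul x y k
  have hsum : |∑ i ∈ Finset.range k, x ^ i * y ^ (k - 1 - i)| ≤ k * M ^ k := by
    calc |∑ i ∈ Finset.range k, x ^ i * y ^ (k - 1 - i)|
        ≤ ∑ i ∈ Finset.range k, |x ^ i * y ^ (k - 1 - i)| := Finset.abs_sum_le_sum_abs _ _
      _ ≤ ∑ _i ∈ Finset.range k, M ^ k := by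
          apply Finset.sum_le_sum
          intro i hi
          rw [abs_mul, abs_pow, abs_pow]
          have hik := Finset.mem_range.mp hi
          calc |x| ^ i * |y| ^ (k - 1 - i) ≤ M ^ i * M ^ (k - 1 - i) :=
                mul_le_mul (pow_le_pow_left₀ (abs_nonneg _) hx _)
                  (pow_le_pow_left₀ (abs_nonneg _) hy _) (by positivity) (by positivity)
            _ = M ^ (i + (k - 1 - i)) := (pow_add M _ _).symm
            _ ≤ M ^ k := by
                apply pow_le_pow_right₀ hM
                omega
      _ = k * M ^ k := by
          rw [Finset.sum_const, Finset.card_range, nsmul_eq_mul]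
  calc |x ^ k - y ^ k| = |∑ i ∈ Finset.range k, x ^ i * y ^ (k - 1 - i)| * |x - y| := by
        rw [← abs_mul, h]
    _ ≤ k * M ^ k * |x - y| := by
        apply mul_le_mul_of_nonneg_right hsum (abs_nonneg _)

lemma my_abs_prod_pow_sub_le {ι : Type*} [DecidableEq ι] (s : Finset ι) (x y : ι → ℝ) (α : ι → ℕ)
    (M δ : ℝ) (hM : 1 ≤ M) (hδ : 0 ≤ δ) (hx : ∀ i ∈ s, |x i| ≤ M) (hy : ∀ i ∈ s, |y i| ≤ M)
    (hxy : ∀ i ∈ s, |x i - y i| ≤ δ) :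
    |∏ i ∈ s, x i ^ α i - ∏ i ∈ s, y i ^ α i| ≤
      (∑ i ∈ s, α i) * M ^ (∑ i ∈ s, α i) * δ := by
  revert hx hy hxy
  induction s using Finset.induction_on with
  | empty => intro _ _ _; simp [hδ]
  | @insert a s ha ih =>
    intro hx hy hxy
    have hM0 : (0:ℝ) ≤ M := le_trans zero_le_one hM
    rw [Finset.prod_insert ha, Finset.prod_insert ha, Finset.sum_insert ha]
    set P := ∏ i ∈ s, x i ^ α i with hP
    set Q := ∏ i ∈ s, y i ^ α i with hQ
    have hPb : |P| ≤ M ^ (∑ i ∈ s, α i) := by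
      rw [hP, Finset.abs_prod]
      calc ∏ i ∈ s, |x i ^ α i| ≤ ∏ i ∈ s, M ^ α i := by
            apply Finset.prod_le_prod (fun i _ => abs_nonneg _)
            intro i hi
            rw [abs_pow]
            exact pow_le_pow_left₀ (abs_nonneg _) (hx i (Finset.mem_insert_of_mem hi)) _
        _ = M ^ (∑ i ∈ s, α i) := Finset.prod_pow_eq_pow_sum s α M
    have hya : |y a ^ α a| ≤ M ^ α a := by
      rw [abs_pow]
      exact pow_le_pow_left₀ (abs_nonneg _) (hy a (Finset.mem_insert_self a s)) _
    have h1 : |x a ^ α a - y a ^ α a| ≤ α a * M ^ α a * δ := by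
      refine le_trans (my_abs_pow_sub_pow_le (x a) (y a) M hM
        (hx a (Finset.mem_insert_self a s)) (hy a (Finset.mem_insert_self a s)) (α a)) ?_
      exact mul_le_mul_of_nonneg_left (hxy a (Finset.mem_insert_self a s))
        (by positivity)
    have ih' : |P - Q| ≤ (∑ i ∈ s, α i) * M ^ (∑ i ∈ s, α i) * δ :=
      ih (fun i hi => hx i (Finset.mem_insert_of_mem hi))
        (fun i hi => hy i (Finset.mem_insert_of_mem hi))
        (fun i hi => hxy i (Finset.mem_insert_of_mem hi))
    calc |x a ^ α a * P - y a ^ α a * Q|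
        = |(x a ^ α a - y a ^ α a) * P + y a ^ α a * (P - Q)| := by ring_nf
      _ ≤ |(x a ^ α a - y a ^ α a) * P| + |y a ^ α a * (P - Q)| := abs_add_le _ _
      _ = |x a ^ α a - y a ^ α a| * |P| + |y a ^ α a| * |P - Q| := by rw [abs_mul, abs_mul]
      _ ≤ (α a * M ^ α a * δ) * M ^ (∑ i ∈ s, α i)
            + M ^ α a * ((∑ i ∈ s, α i) * M ^ (∑ i ∈ s, α i) * δ) := by
          gcongr
      _ = ((α a : ℝ) + (∑ i ∈ s, α i)) * M ^ (α a + ∑ i ∈ s, α i) * δ := by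
          rw [pow_add]; ring
      _ = ((α a + ∑ i ∈ s, α i : ℕ) : ℝ) * M ^ (α a + ∑ i ∈ s, α i) * δ := by push_cast; ring

lemma my_support_card_le (n d : ℕ) (f : MvPolynomial (Fin n) ℚ) (hdeg : f.totalDegree ≤ d) :
    f.support.card ≤ (n + d).choose d := by
  classical
  have hkey : ∀ α ∈ f.support, (α.sum fun _ k => k) ≤ d := fun α hα =>
    le_trans (MvPolynomial.le_totalDegree hα) hdeg
  set F : (Fin n →₀ ℕ) → Multiset (Fin (n + 1)) := fun α =>
    Finsupp.toMultiset (α.mapDomain Fin.castSucc)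
      + Multiset.replicate (d - (α.sum fun _ k => k)) (Fin.last n) with hF
  have hcount : ∀ (α : Fin n →₀ ℕ) (i : Fin n), (F α).count i.castSucc = α i := by
    intro α i
    rw [hF]
    simp only [Multiset.count_add, Multiset.count_replicate]
    rw [if_neg (by simp [Fin.ext_iff]; omega), Finsupp.count_toMultiset,
      Finsupp.mapDomain_apply (Fin.castSucc_injective n)]
    simp
  have hcard : ∀ α ∈ f.support, Multiset.card (F α) = d := by
    intro α hα
    rw [hF]
    simp only [Multiset.card_add, Multiset.card_replicate, Finsupp.card_toMultiset]
    have : ((α.mapDomain Fin.castSucc).sum fun _ => id) = (α.sum fun _ k => k) := by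
      rw [Finsupp.sum_mapDomain_index] <;> simp
    rw [this]
    have := hkey α hα
    omega
  let G : f.support → Sym (Fin (n + 1)) d := fun a => ⟨F a.1, hcard a.1 a.2⟩
  have hinj : Function.Injective G := by
    intro a b hab
    have hFab : F a.1 = F b.1 := congrArg Sym.toMultiset hab
    apply Subtype.ext
    ext i
    rw [← hcount a.1 i, ← hcount b.1 i, hFab]
  calc f.support.card = Fintype.card f.support := (Fintype.card_coe _).symm
    _ ≤ Fintype.card (Sym (Fin (n + 1)) d) := Fintype.card_le_of_injective G hinj
    _ = (Fintype.card (Fin (n + 1)) + d - 1).choose d := Sym.card_sym_eq_choose d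
    _ = (n + d).choose d := by rw [Fintype.card_fin]; congr 1; omega

lemma my_eval_sub_le (n d : ℕ) (f : MvPolynomial (Fin n) ℚ) (hdeg : f.totalDegree ≤ d)
    (c M δ : ℝ) (hc1 : ∀ mo : Fin n →₀ ℕ, |((f.coeff mo : ℚ) : ℝ)| ≤ c) (hM : 1 ≤ M)
    (hδ : 0 ≤ δ) (x q : Fin n → ℝ) (hx : ∀ i, |x i| ≤ M) (hq : ∀ i, |q i| ≤ M)
    (hxq : ∀ i, |x i - q i| ≤ δ) :
    |MvPolynomial.eval x (MvPolynomial.map (algebraMap ℚ ℝ) f)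
      - MvPolynomial.eval q (MvPolynomial.map (algebraMap ℚ ℝ) f)|
      ≤ f.support.card * c * (d * M ^ d * δ) := by
  classical
  set g := MvPolynomial.map (algebraMap ℚ ℝ) f with hg
  have hsupp : g.support = f.support :=
    MvPolynomial.support_map_of_injective f (algebraMap ℚ ℝ).injective
  calc |MvPolynomial.eval x g - MvPolynomial.eval q g|
      = |∑ α ∈ g.support,
          (g.coeff α * ∏ i, x i ^ α i - g.coeff α * ∏ i, q i ^ α i)| := by
        rw [MvPolynomial.eval_eq', MvPolynomial.eval_eq', Finset.sum_sub_distrib]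
    _ ≤ ∑ α ∈ g.support,
          |g.coeff α * ∏ i, x i ^ α i - g.coeff α * ∏ i, q i ^ α i| :=
        Finset.abs_sum_le_sum_abs _ _
    _ ≤ ∑ _α ∈ g.support, c * (d * M ^ d * δ) := by
        apply Finset.sum_le_sum
        intro α hα
        rw [← mul_sub, abs_mul]
        have hcoeff : |g.coeff α| ≤ c := by
          rw [hg, MvPolynomial.coeff_map, eq_ratCast]
          exact hc1 α
        have hdegα : (∑ i, α i) ≤ d := by
          have h1 : α ∈ f.support := hsupp ▸ hα
          have h2 := MvPolynomial.le_totalDegree h1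
          have hs : (α.sum fun _ e => e) = ∑ i, α i :=
            Finsupp.sum_fintype α (fun _ e => e) (fun _ => rfl)
          rw [← hs]
          exact h2.trans hdeg
        have hprod : |∏ i, x i ^ α i - ∏ i, q i ^ α i| ≤ d * M ^ d * δ := by
          refine (my_abs_prod_pow_sub_le Finset.univ x q (⇑α) M δ hM hδ
            (fun i _ => hx i) (fun i _ => hq i) (fun i _ => hxq i)).trans ?_
          have h1 : ((∑ i, α i : ℕ) : ℝ) ≤ (d : ℝ) := by exact_mod_cast hdegα
          have h2 : M ^ (∑ i, α i) ≤ M ^ d := pow_le_pow_right₀ hM hdegα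
          have h3 := mul_le_mul h1 h2 (by positivity) (Nat.cast_nonneg d)
          exact mul_le_mul_of_nonneg_right h3 hδ
        exact mul_le_mul hcoeff hprod (abs_nonneg _) (le_trans (abs_nonneg _) hcoeff)
    _ = f.support.card * c * (d * M ^ d * δ) := by
        rw [Finset.sum_const, hsupp, nsmul_eq_mul]
        ring

/-- With `c = ‖f‖∞`, `M ≥ max_{q∈Q} ‖q‖∞ + 1`, `0 < m ≤ min_{q∈Q} |f(q)|` and
`𝒹 = min 1 (m / (C(n+d,d)² M^d c))`: every point `r` with `‖r - q‖∞ ≤ 𝒹` lies in the same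
connected component of `S = {x | f(x) ≠ 0}` as `q`. -/
theorem stmt11 (n d : ℕ) (hn : 1 ≤ n) (f : MvPolynomial (Fin n) ℚ)
    (hdeg : f.totalDegree = d) (hd1 : 1 ≤ d)
    (Q : Set (Fin n → ℝ)) (hQne : Q.Nonempty) (hQfin : Q.Finite)
    (hQ : ∀ q ∈ Q, MvPolynomial.eval q (MvPolynomial.map (algebraMap ℚ ℝ) f) ≠ 0)
    (c : ℝ)
    (hc1 : ∀ mo : Fin n →₀ ℕ, |((f.coeff mo : ℚ) : ℝ)| ≤ c)
    (hc2 : ∃ mo : Fin n →₀ ℕ, |((f.coeff mo : ℚ) : ℝ)| = c)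
    (M : ℝ) (hM : ∀ q ∈ Q, ∀ i, |q i| + 1 ≤ M)
    (m : ℝ) (hm : 0 < m)
    (hm2 : ∀ q ∈ Q, m ≤ |MvPolynomial.eval q (MvPolynomial.map (algebraMap ℚ ℝ) f)|) :
    ∀ q ∈ Q, ∀ r : Fin n → ℝ,
      (∀ i, |r i - q i| ≤ min 1 (m / (((n + d).choose d : ℝ) ^ 2 * M ^ d * c))) →
      r ∈ connectedComponentIn
        {x : Fin n → ℝ | MvPolynomial.eval x (MvPolynomial.map (algebraMap ℚ ℝ) f) ≠ 0} q := by
  intro q hq r hr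
  set g := MvPolynomial.map (algebraMap ℚ ℝ) f with hg
  set C : ℝ := ((n + d).choose d : ℝ) with hC
  set δ : ℝ := min 1 (m / (C ^ 2 * M ^ d * c)) with hδdef
  -- basic positivity facts
  have hfne : f ≠ 0 := by
    intro h
    rw [h, MvPolynomial.totalDegree_zero] at hdeg
    omega
  have hc0 : 0 < c := by
    obtain ⟨mo, hmo⟩ := MvPolynomial.ne_zero_iff.mp hfne
    have := hc1 mo
    have h0 : (0:ℝ) < |((f.coeff mo : ℚ) : ℝ)| := by
      rw [abs_pos]
      exact_mod_cast hmo
    linarith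
  have hM1 : 1 ≤ M := by
    have := hM q hq ⟨0, hn⟩
    have := abs_nonneg (q ⟨0, hn⟩)
    linarith
  have hM0 : (0:ℝ) < M := lt_of_lt_of_le one_pos hM1
  have hCd : (d : ℝ) + 1 ≤ C := by
    rw [hC]
    have h1 : (d + 1) ≤ (n + d).choose d := by
      calc d + 1 = (1 + d).choose d := by
            rw [add_comm 1 d, Nat.choose_succ_self_right]
      _ ≤ (n + d).choose d := Nat.choose_le_choose d (by omega)
    exact_mod_cast h1
  have hC0 : (0:ℝ) < C := by
    have : (0:ℝ) ≤ (d:ℝ) := Nat.cast_nonneg d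
    linarith
  have hK0 : (0:ℝ) < C ^ 2 * M ^ d * c := by positivity
  have hδ0 : 0 ≤ δ := le_min zero_le_one (le_of_lt (div_pos hm hK0))
  have hδ1 : δ ≤ 1 := min_le_left _ _
  have hδ2 : δ ≤ m / (C ^ 2 * M ^ d * c) := min_le_right _ _
  -- every point of the segment [q, r] is in S
  have hqM : ∀ i, |q i| ≤ M := fun i => by have := hM q hq i; linarith
  have hseg : segment ℝ q r ⊆
      {x : Fin n → ℝ | MvPolynomial.eval x g ≠ 0} := by
    intro x hx
    obtain ⟨a, b, ha, hb, hab, hxe⟩ := hx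
    have hxq : ∀ i, |x i - q i| ≤ δ := by
      intro i
      have hxi : x i = a * q i + b * r i := by
        rw [← hxe]; simp
      have ha1 : a = 1 - b := by linarith
      have : x i - q i = b * (r i - q i) := by
        rw [hxi, ha1]; ring
      rw [this, abs_mul, abs_of_nonneg hb]
      calc b * |r i - q i| ≤ 1 * δ := by
            apply mul_le_mul (by linarith) (hr i) (abs_nonneg _) zero_le_one
        _ = δ := one_mul δ
    have hxM : ∀ i, |x i| ≤ M := by
      intro i
      have h1 := hxq i
      have h2 := hM q hq i
      have := abs_sub_abs_le_abs_sub (x i) (q i)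
      linarith [hδ1]
    have hest := my_eval_sub_le n d f (le_of_eq hdeg) c M δ hc1 hM1 hδ0 x q hxM hqM hxq
    have hcard : (f.support.card : ℝ) ≤ C := by
      rw [hC]
      exact_mod_cast my_support_card_le n d f (le_of_eq hdeg)
    have hlt : |MvPolynomial.eval x g - MvPolynomial.eval q g| < m := by
      calc |MvPolynomial.eval x g - MvPolynomial.eval q g|
          ≤ f.support.card * c * (d * M ^ d * δ) := hest
        _ ≤ C * c * (d * M ^ d * (m / (C ^ 2 * M ^ d * c))) := by
            gcongr
        _ = d * m / C := by
            field_simp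
        _ < m := by
            rw [div_lt_iff₀ hC0]
            nlinarith
    have hqm := hm2 q hq
    intro hx0
    rw [hx0, zero_sub, abs_neg] at hlt
    linarith
  have hconn : IsPreconnected (segment ℝ q r) := (convex_segment q r).isPreconnected
  have hsub := hconn.subset_connectedComponentIn (left_mem_segment ℝ q r) hseg
  exact hsub (right_mem_segment ℝ q r)
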